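/- arXiv:1806.11061 — 3 statements merged into one kernel-verified Lean document; each statement's English description precedes it below -/
import Mathlib

section
/- Let n, r, k be natural numbers with r ≥ 1 and k + r ≤ n + 1, and let 𝒞 = {{1,...,r-1} ∪ {i} : r ≤ i ≤ r+k-1} ⊆ [n]^{(r)} be the initial segment of the lexicographic order on r-sets of size k. Then the upper shadow satisfies |∂⁺𝒞| = ∑_{i=0}^{k-1} (n - r - i) = C(n-r+1, 2) - C(n-r-k+1, 2). -/
open Finset

/-- The upper shadow of a family of subsets of `{1,...,n}`:
`∂⁺𝒜 = {A ∪ {i} : A ∈ 𝒜, i ∈ {1,...,n} \ A}`. -/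
def upperShadowIn (n : ℕ) (𝒜 : Finset (Finset ℕ)) : Finset (Finset ℕ) :=
  𝒜.biUnion (fun A => (Finset.Icc 1 n \ A).image (fun i => insert i A))

/-- `𝒞 = {{1,...,r-1} ∪ {i} : r ≤ i ≤ r+k-1}`, the initial segment of lex on
`[n]^{(r)}` of size `k`. -/
def lexInitSeg (r k : ℕ) : Finset (Finset ℕ) :=
  (Finset.Ico r (r + k)).image (fun i => insert i (Finset.Icc 1 (r - 1)))

lemma sum_aux (m k : ℕ) (h : k ≤ m + 1) :
    ∑ i ∈ Finset.range k, (m - i) = (m+1).choose 2 - (m - k + 1).choose 2 := by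
  induction k with
  | zero => simp
  | succ k ih =>
    have hk : k ≤ m := by omega
    rw [Finset.sum_range_succ, ih (by omega)]
    have h1 : (m - k + 1).choose 2 = (m - k).choose 2 + (m - k) := by
      rw [Nat.choose_succ_succ]
      simp [Nat.choose_one_right]
      ring
    have h2 : (m - k + 1).choose 2 ≤ (m + 1).choose 2 :=
      Nat.choose_le_choose 2 (by omega)
    have h3 : (m - (k+1) + 1).choose 2 = (m - k).choose 2 := by
      rcases Nat.lt_or_ge k m with h' | h'
      · congr 1; omega
      · have : k = m := by omega
        subst this
        simp
    rw [h3]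
    omega

/-- For `r ≥ 1` and `k + r ≤ n + 1`,
`|∂⁺𝒞| = ∑_{i=0}^{k-1} (n - r - i) = C(n-r+1,2) - C(n-r-k+1,2)`. -/
theorem stmt_12 (n r k : ℕ) (hr : 1 ≤ r) (hk : k + r ≤ n + 1) :
    (upperShadowIn n (lexInitSeg r k)).card = ∑ i ∈ Finset.range k, (n - r - i) ∧
    (∑ i ∈ Finset.range k, (n - r - i))
      = (n - r + 1).choose 2 - (n - r - k + 1).choose 2 := by
  constructor
  · set C := Finset.Icc 1 (r-1) with hCdef
    have hmemC : ∀ x, r ≤ x → x ∉ C := by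
      intro x hx
      simp only [hCdef, Finset.mem_Icc]
      omega
    have key : upperShadowIn n (lexInitSeg r k)
        = ((Finset.Ico r (r+k)).sigma (fun a => Finset.Ioc a n)).image
            (fun p => insert p.1 (insert p.2 C)) := by
      ext s
      simp only [upperShadowIn, lexInitSeg, Finset.mem_biUnion, Finset.mem_image,
        Finset.mem_sdiff, Finset.mem_Ico, Finset.mem_Icc, Finset.mem_sigma, Finset.mem_Ioc]
      constructor
      · rintro ⟨A, ⟨i, hi, rfl⟩, j, ⟨⟨hj1, hjn⟩, hjA⟩, rfl⟩
        have hji : j ≠ i := by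
          intro h; subst h; exact hjA (Finset.mem_insert_self _ _)
        have hjC : r ≤ j := by
          by_contra h
          exact hjA (Finset.mem_insert_of_mem (by simp only [hCdef, Finset.mem_Icc]; omega))
        rcases lt_or_gt_of_ne hji with h | h
        · refine ⟨⟨j, i⟩, ?_, rfl⟩
          dsimp only
          exact ⟨⟨hjC, by omega⟩, h, by omega⟩
        · refine ⟨⟨i, j⟩, ?_, ?_⟩
          · dsimp only
            exact ⟨hi, h, hjn⟩
          · dsimp only
            exact (Finset.insert_comm _ _ _).symm
      · rintro ⟨⟨a, b⟩, hab, rfl⟩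
        dsimp only at hab ⊢
        obtain ⟨⟨ha1, ha2⟩, hab', hbn⟩ := hab
        refine ⟨insert a C, ⟨a, ⟨ha1, ha2⟩, rfl⟩, b, ⟨⟨by omega, hbn⟩, ?_⟩, ?_⟩
        · simp only [Finset.mem_insert]
          push_neg
          exact ⟨by omega, hmemC b (by omega)⟩
        · exact Finset.insert_comm _ _ _
    have hinj : Set.InjOn (fun p : Σ _ : ℕ, ℕ => insert p.1 (insert p.2 C))
        (((Finset.Ico r (r+k)).sigma (fun a => Finset.Ioc a n)) : Set (Σ _ : ℕ, ℕ)) := by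
      rintro ⟨a, b⟩ hp ⟨a', b'⟩ hq h
      simp only [Finset.coe_sigma, Set.mem_sigma_iff, Finset.mem_coe, Finset.mem_Ico,
        Finset.mem_Ioc] at hp hq
      simp only at h
      have mem1 : a ∈ insert a' (insert b' C) := h ▸ Finset.mem_insert_self _ _
      have mem2 : b ∈ insert a' (insert b' C) := h ▸ Finset.mem_insert_of_mem (Finset.mem_insert_self _ _)
      have mem3 : a' ∈ insert a (insert b C) := h.symm ▸ Finset.mem_insert_self _ _
      have mem4 : b' ∈ insert a (insert b C) := h.symm ▸ Finset.mem_insert_of_mem (Finset.mem_insert_self _ _)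
      simp only [Finset.mem_insert, hCdef, Finset.mem_Icc] at mem1 mem2 mem3 mem4
      have : a = a' ∧ b = b' := by omega
      simp [this.1, this.2]
    rw [key, Finset.card_image_of_injOn hinj, Finset.card_sigma]
    simp only [Nat.card_Ioc]
    rw [Finset.sum_Ico_eq_sum_range]
    refine Finset.sum_congr (by congr 1; omega) (fun i hi => by omega)
  · exact sum_aux (n - r) k (by omega)
end

section
/- (Local LYM for upper shadows, with equality cases) Let 𝒜 ⊆ [n]^{(r)} with r < n. Then |∂⁺𝒜| / C(n, r+1) ≥ |𝒜| / C(n, r), and equality holds if and only if 𝒜 = ∅ or 𝒜 = [n]^{(r)}. -/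
open Finset

section Aux

variable {n r : ℕ} {𝒜 : Finset (Finset (Fin n))}

/-- For `A ∈ 𝒜` a family of `r`-sets, the members of the upper shadow containing `A`
are exactly the `n - r` sets `insert i A`. -/
lemma aux_fiber_card (h𝒜 : 𝒜 ⊆ Finset.powersetCard r (Finset.univ : Finset (Fin n)))
    {A : Finset (Fin n)} (hA : A ∈ 𝒜) :
    ((Finset.upShadow 𝒜).filter (fun B => A ⊆ B)).card = n - r := by
  have hsized : (𝒜 : Set (Finset (Fin n))).Sized r := fun s hs =>
    (Finset.mem_powersetCard.1 (h𝒜 hs)).2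
  have hAr : A.card = r := hsized hA
  have hset : ((Finset.upShadow 𝒜).filter (fun B => A ⊆ B)) =
      Aᶜ.image (fun i => insert i A) := by
    ext B
    simp only [mem_filter, mem_image, mem_compl]
    constructor
    · rintro ⟨hB, hAB⟩
      have hBcard : B.card = r + 1 := hsized.upShadow hB
      have hss : A ⊂ B := by
        refine Finset.ssubset_iff_subset_ne.2 ⟨hAB, ?_⟩
        intro h; rw [h, hBcard] at hAr; omega
      obtain ⟨i, hiB, hiA⟩ := Finset.exists_of_ssubset hss
      refine ⟨i, hiA, ?_⟩
      apply Finset.eq_of_subset_of_card_le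
      · exact Finset.insert_subset hiB hAB
      · rw [hBcard, Finset.card_insert_of_notMem hiA, hAr]
    · rintro ⟨i, hiA, rfl⟩
      exact ⟨Finset.insert_mem_upShadow hA hiA, Finset.subset_insert _ _⟩
  rw [hset, Finset.card_image_of_injOn, Finset.card_compl, hAr, Fintype.card_fin]
  intro i hi j hj hij
  simp only [Finset.coe_compl, Set.mem_compl_iff, Finset.mem_coe] at hi hj
  have hij' : insert i A = insert j A := hij
  have : i ∈ insert j A := hij' ▸ Finset.mem_insert_self i A
  rcases Finset.mem_insert.1 this with h | h
  · exact h
  · exact absurd h hi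

/-- For `B` in the upper shadow, the `r`-subsets of `B` belonging to `𝒜` are at most `r+1`,
with equality iff all `r`-subsets of `B` are in `𝒜`. -/
lemma aux_term (h𝒜 : 𝒜 ⊆ Finset.powersetCard r (Finset.univ : Finset (Fin n)))
    {B : Finset (Fin n)} (hB : B ∈ Finset.upShadow 𝒜) :
    (𝒜.filter (fun A => A ⊆ B)).card ≤ r + 1 ∧
    ((𝒜.filter (fun A => A ⊆ B)).card = r + 1 ↔
      ∀ A ⊆ B, A.card = r → A ∈ 𝒜) := by
  have hsized : (𝒜 : Set (Finset (Fin n))).Sized r := fun s hs =>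
    (Finset.mem_powersetCard.1 (h𝒜 hs)).2
  have hBcard : B.card = r + 1 := hsized.upShadow hB
  have hsub : 𝒜.filter (fun A => A ⊆ B) ⊆ B.powersetCard r := by
    intro A hA
    rw [mem_filter] at hA
    exact Finset.mem_powersetCard.2 ⟨hA.2, hsized hA.1⟩
  have hcardp : (B.powersetCard r).card = r + 1 := by
    rw [Finset.card_powersetCard, hBcard, Nat.choose_succ_self_right]
  constructor
  · calc (𝒜.filter (fun A => A ⊆ B)).card ≤ (B.powersetCard r).card :=
          Finset.card_le_card hsub
      _ = r + 1 := hcardp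
  · constructor
    · intro heq A hAB hAr
      have : 𝒜.filter (fun A => A ⊆ B) = B.powersetCard r :=
        Finset.eq_of_subset_of_card_le hsub (by rw [heq, hcardp])
      have hmem : A ∈ B.powersetCard r := Finset.mem_powersetCard.2 ⟨hAB, hAr⟩
      rw [← this, mem_filter] at hmem
      exact hmem.1
    · intro hcl
      have : B.powersetCard r ⊆ 𝒜.filter (fun A => A ⊆ B) := by
        intro A hA
        rw [Finset.mem_powersetCard] at hA
        exact mem_filter.2 ⟨hcl A hA.1 hA.2, hA.1⟩
      rw [Finset.Subset.antisymm hsub this, hcardp]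

/-- Double counting: the two sums coincide. -/
lemma aux_double_count (𝒜 : Finset (Finset (Fin n))) :
    ∑ B ∈ Finset.upShadow 𝒜, (𝒜.filter (fun A => A ⊆ B)).card =
    ∑ A ∈ 𝒜, ((Finset.upShadow 𝒜).filter (fun B => A ⊆ B)).card := by
  simp_rw [Finset.card_filter]
  exact Finset.sum_comm

lemma aux_count_left (h𝒜 : 𝒜 ⊆ Finset.powersetCard r (Finset.univ : Finset (Fin n))) :
    ∑ B ∈ Finset.upShadow 𝒜, (𝒜.filter (fun A => A ⊆ B)).card = 𝒜.card * (n - r) := by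
  rw [aux_double_count]
  rw [Finset.sum_congr rfl (fun A hA => aux_fiber_card h𝒜 hA), Finset.sum_const, smul_eq_mul]

/-- The key natural-number inequality. -/
lemma aux_ineq (h𝒜 : 𝒜 ⊆ Finset.powersetCard r (Finset.univ : Finset (Fin n))) :
    𝒜.card * (n - r) ≤ (Finset.upShadow 𝒜).card * (r + 1) := by
  rw [← aux_count_left h𝒜]
  calc ∑ B ∈ Finset.upShadow 𝒜, (𝒜.filter (fun A => A ⊆ B)).card
      ≤ ∑ _B ∈ Finset.upShadow 𝒜, (r + 1) :=
        Finset.sum_le_sum (fun B hB => (aux_term h𝒜 hB).1)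
    _ = (Finset.upShadow 𝒜).card * (r + 1) := by rw [Finset.sum_const, smul_eq_mul]

/-- Equality in the count forces the closure property. -/
lemma aux_eq_closure (h𝒜 : 𝒜 ⊆ Finset.powersetCard r (Finset.univ : Finset (Fin n)))
    (heq : 𝒜.card * (n - r) = (Finset.upShadow 𝒜).card * (r + 1)) :
    ∀ B ∈ Finset.upShadow 𝒜, ∀ A ⊆ B, A.card = r → A ∈ 𝒜 := by
  intro B hB
  refine ((aux_term h𝒜 hB).2).1 ?_
  by_contra hne
  have hlt : (𝒜.filter (fun A => A ⊆ B)).card < r + 1 :=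
    lt_of_le_of_ne (aux_term h𝒜 hB).1 hne
  have hsum : ∑ B ∈ Finset.upShadow 𝒜, (𝒜.filter (fun A => A ⊆ B)).card <
      ∑ _B ∈ Finset.upShadow 𝒜, (r + 1) :=
    Finset.sum_lt_sum (fun C hC => (aux_term h𝒜 hC).1) ⟨B, hB, hlt⟩
  rw [aux_count_left h𝒜, Finset.sum_const, smul_eq_mul, heq] at hsum
  exact lt_irrefl _ hsum

/-- The closure property gives equality in the count. -/
lemma aux_closure_eq (h𝒜 : 𝒜 ⊆ Finset.powersetCard r (Finset.univ : Finset (Fin n)))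
    (hcl : ∀ B ∈ Finset.upShadow 𝒜, ∀ A ⊆ B, A.card = r → A ∈ 𝒜) :
    𝒜.card * (n - r) = (Finset.upShadow 𝒜).card * (r + 1) := by
  rw [← aux_count_left h𝒜]
  rw [Finset.sum_congr rfl (fun B hB => ((aux_term h𝒜 hB).2).2 (hcl B hB)),
    Finset.sum_const, smul_eq_mul]

/-- Connectivity: under the closure property, a nonempty family of `r`-sets contains all
`r`-sets. -/
lemma aux_conn (h𝒜 : 𝒜 ⊆ Finset.powersetCard r (Finset.univ : Finset (Fin n)))
    (hcl : ∀ B ∈ Finset.upShadow 𝒜, ∀ A ⊆ B, A.card = r → A ∈ 𝒜) :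
    ∀ k (A A' : Finset (Fin n)), A ∈ 𝒜 → A'.card = r → (A' \ A).card ≤ k → A' ∈ 𝒜 := by
  have hsized : (𝒜 : Set (Finset (Fin n))).Sized r := fun s hs =>
    (Finset.mem_powersetCard.1 (h𝒜 hs)).2
  intro k
  induction k with
  | zero =>
    intro A A' hA hA' hk
    have : A' \ A = ∅ := Finset.card_eq_zero.1 (Nat.le_zero.1 hk)
    have hss : A' ⊆ A := by
      intro x hx
      by_contra hxA
      exact absurd (Finset.mem_sdiff.2 ⟨hx, hxA⟩) (by simp [this])
    have : A' = A := Finset.eq_of_subset_of_card_le hss (by rw [hA', hsized hA])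
    rwa [this]
  | succ k ih =>
    intro A A' hA hA' hk
    by_cases hzero : (A' \ A).card = 0
    · exact ih A A' hA hA' (by omega)
    · obtain ⟨y, hy⟩ := Finset.card_pos.1 (Nat.pos_of_ne_zero hzero)
      rw [Finset.mem_sdiff] at hy
      have hAr : A.card = r := hsized hA
      have hAsubne : ¬ A ⊆ A' := by
        intro hss
        have : A = A' := Finset.eq_of_subset_of_card_le hss (by rw [hA', hAr])
        rw [← this] at hy
        exact hy.2 hy.1
      obtain ⟨x, hxA, hxA'⟩ := Finset.not_subset.1 hAsubne
      set A₂ := insert y (A.erase x) with hA₂def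
      have hB : insert y A ∈ Finset.upShadow 𝒜 := Finset.insert_mem_upShadow hA hy.2
      have hA₂sub : A₂ ⊆ insert y A :=
        Finset.insert_subset_insert _ (Finset.erase_subset _ _)
      have hA₂card : A₂.card = r := by
        rw [hA₂def, Finset.card_insert_of_notMem, Finset.card_erase_of_mem hxA, hAr]
        · have : 1 ≤ r := by
            rw [← hAr]; exact Finset.card_pos.2 ⟨x, hxA⟩
          omega
        · intro h
          exact hy.2 (Finset.mem_of_mem_erase h)
      have hA₂ : A₂ ∈ 𝒜 := hcl _ hB _ hA₂sub hA₂card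
      refine ih A₂ A' hA₂ hA' ?_
      have hsub2 : A' \ A₂ ⊆ (A' \ A).erase y := by
        intro z hz
        rw [Finset.mem_sdiff] at hz
        have hzy : z ≠ y := by
          intro h; exact hz.2 (h ▸ Finset.mem_insert_self y _)
        have hzA : z ∉ A := by
          intro hzA
          have hzx : z ≠ x := by intro h; exact hxA' (h ▸ hz.1)
          exact hz.2 (Finset.mem_insert_of_mem (Finset.mem_erase.2 ⟨hzx, hzA⟩))
        exact Finset.mem_erase.2 ⟨hzy, Finset.mem_sdiff.2 ⟨hz.1, hzA⟩⟩
      have := Finset.card_le_card hsub2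
      rw [Finset.card_erase_of_mem (Finset.mem_sdiff.2 hy)] at this
      omega

end Aux

/-- Local LYM for upper shadows with equality cases: for `𝒜 ⊆ [n]^{(r)}` with `r < n`,
`|∂⁺𝒜| / C(n,r+1) ≥ |𝒜| / C(n,r)`, with equality iff `𝒜 = ∅` or `𝒜 = [n]^{(r)}`. -/
theorem stmt_14 (n r : ℕ) (hr : r < n) (𝒜 : Finset (Finset (Fin n)))
    (h𝒜 : 𝒜 ⊆ Finset.powersetCard r (Finset.univ : Finset (Fin n))) :
    ((𝒜.card : ℚ) / n.choose r ≤ (Finset.upShadow 𝒜).card / n.choose (r + 1)) ∧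
    (((Finset.upShadow 𝒜).card : ℚ) / n.choose (r + 1) = (𝒜.card : ℚ) / n.choose r
      ↔ 𝒜 = ∅ ∨ 𝒜 = Finset.powersetCard r (Finset.univ : Finset (Fin n))) := by
  have hc : 0 < n.choose r := Nat.choose_pos hr.le
  have hd : 0 < n.choose (r + 1) := Nat.choose_pos hr
  have hid : n.choose (r + 1) * (r + 1) = n.choose r * (n - r) := Nat.choose_succ_right_eq n r
  set a := 𝒜.card with ha
  set b := (Finset.upShadow 𝒜).card with hb
  have hnat : a * (n - r) ≤ b * (r + 1) := aux_ineq h𝒜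
  -- a * d ≤ b * c in ℕ
  have hswap : ∀ m : ℕ, m * n.choose (r + 1) * (r + 1) = m * (n - r) * n.choose r := by
    intro m
    rw [mul_assoc, hid]; ring
  have hmain : a * n.choose (r + 1) ≤ b * n.choose r := by
    have h1 : a * n.choose (r + 1) * (r + 1) ≤ b * n.choose r * (r + 1) := by
      calc a * n.choose (r + 1) * (r + 1) = a * (n - r) * n.choose r := hswap a
        _ ≤ b * (r + 1) * n.choose r := Nat.mul_le_mul_right _ hnat
        _ = b * n.choose r * (r + 1) := by ring
    exact Nat.le_of_mul_le_mul_right h1 (by omega)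
  have hqc : (0 : ℚ) < (n.choose r : ℚ) := by exact_mod_cast hc
  have hqd : (0 : ℚ) < (n.choose (r + 1) : ℚ) := by exact_mod_cast hd
  constructor
  · rw [div_le_div_iff₀ hqc hqd]
    exact_mod_cast hmain
  · rw [div_eq_div_iff hqd.ne' hqc.ne']
    have hcast : ((b : ℚ) * n.choose r = (a : ℚ) * n.choose (r + 1)) ↔
        b * n.choose r = a * n.choose (r + 1) := by exact_mod_cast Iff.rfl
    rw [hcast]
    have hiff : b * n.choose r = a * n.choose (r + 1) ↔ a * (n - r) = b * (r + 1) := by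
      constructor
      · intro h
        have h1 : a * n.choose (r + 1) * (r + 1) = b * n.choose r * (r + 1) := by rw [h]
        have h2 : a * (n - r) * n.choose r = b * (r + 1) * n.choose r := by
          calc a * (n - r) * n.choose r = a * n.choose (r + 1) * (r + 1) := (hswap a).symm
            _ = b * n.choose r * (r + 1) := h1
            _ = b * (r + 1) * n.choose r := by ring
        exact Nat.eq_of_mul_eq_mul_right hc h2
      · intro h
        have h2 : b * n.choose r * (r + 1) = a * n.choose (r + 1) * (r + 1) := by
          calc b * n.choose r * (r + 1) = b * (r + 1) * n.choose r := by ring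
            _ = a * (n - r) * n.choose r := by rw [h]
            _ = a * n.choose (r + 1) * (r + 1) := (hswap a).symm
        exact Nat.eq_of_mul_eq_mul_right (by omega) h2
    rw [hiff]
    constructor
    · intro heq
      by_cases hemp : 𝒜 = ∅
      · exact Or.inl hemp
      · right
        obtain ⟨A0, hA0⟩ := Finset.nonempty_of_ne_empty hemp
        have hcl := aux_eq_closure h𝒜 heq
        apply Finset.Subset.antisymm h𝒜
        intro A' hA'
        rw [Finset.mem_powersetCard] at hA'
        exact aux_conn h𝒜 hcl (A' \ A0).card A0 A' hA0 hA'.2 le_rfl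
    · rintro (rfl | rfl)
      · simp [ha, hb, Finset.upShadow_empty]
      · refine aux_closure_eq h𝒜 ?_
        intro B _ A _ hAr
        exact Finset.mem_powersetCard.2 ⟨Finset.subset_univ _, hAr⟩
end

section
/- Let 𝒜 ⊆ [n]^{(r)} be an initial segment of the colexicographic order, and let i < j be elements of {1,...,n}. If |{A ∈ 𝒜 : i ∈ A}| = |{A ∈ 𝒜 : j ∈ A}|, then the transposition σ = (i j) fixes 𝒜 setwise: σ(𝒜) = 𝒜, where σ(𝒜) = {σ(A) : A ∈ 𝒜} and σ(A) = {σ(a) : a ∈ A}. -/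
open Finset

lemma image_swap_eq {α : Type*} [DecidableEq α] {i j : α} {A : Finset α}
    (hj : j ∈ A) (hi : i ∉ A) : A.image (Equiv.swap i j) = insert i (A.erase j) := by
  ext a
  simp only [mem_image, mem_insert, mem_erase]
  constructor
  · rintro ⟨b, hb, rfl⟩
    rcases eq_or_ne b i with rfl | hbi
    · exact absurd hb hi
    rcases eq_or_ne b j with rfl | hbj
    · simp
    · rw [Equiv.swap_apply_of_ne_of_ne hbi hbj]
      exact Or.inr ⟨hbj, hb⟩
  · rintro (rfl | ⟨haj, haA⟩)
    · exact ⟨j, hj, Equiv.swap_apply_right _ _⟩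
    · refine ⟨a, haA, ?_⟩
      exact Equiv.swap_apply_of_ne_of_ne (fun h => hi (h ▸ haA)) haj

/-- If `𝒜 ⊆ [n]^{(r)}` is an initial segment of the colexicographic order, `i < j`,
and `|{A ∈ 𝒜 : i ∈ A}| = |{A ∈ 𝒜 : j ∈ A}|`, then the transposition `(i j)` fixes
`𝒜` setwise. -/
theorem stmt_17 (n r : ℕ) (𝒜 : Finset (Finset (Fin n)))
    (h𝒜 : 𝒜 ⊆ Finset.powersetCard r (Finset.univ : Finset (Fin n)))
    (hinit : ∀ A ∈ 𝒜, ∀ B ∈ Finset.powersetCard r (Finset.univ : Finset (Fin n)),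
      toColex B ≤ toColex A → B ∈ 𝒜)
    (i j : Fin n) (hij : i < j)
    (hcount : (𝒜.filter (fun A => i ∈ A)).card = (𝒜.filter (fun A => j ∈ A)).card) :
    𝒜.image (fun A => A.image (Equiv.swap i j)) = 𝒜 := by
  have hne : i ≠ j := ne_of_lt hij
  set S := (𝒜.filter (fun A => j ∈ A)).filter (fun A => i ∉ A) with hS
  set T := (𝒜.filter (fun A => i ∈ A)).filter (fun A => j ∉ A) with hT
  -- compression step: swapping an element of S lands in T
  have stepA : ∀ B ∈ S, B.image (Equiv.swap i j) ∈ T := by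
    intro B hB
    simp only [hS, mem_filter] at hB
    obtain ⟨⟨hB𝒜, hjB⟩, hiB⟩ := hB
    have himg : B.image (Equiv.swap i j) = insert i (B.erase j) := image_swap_eq hjB hiB
    have hcard : (insert i (B.erase j)).card = B.card := by
      rw [card_insert_of_notMem (fun h => hiB (mem_of_mem_erase h)),
        card_erase_of_mem hjB]
      have : 0 < B.card := card_pos.2 ⟨j, hjB⟩
      omega
    have hBr : B.card = r := (mem_powersetCard.1 (h𝒜 hB𝒜)).2
    have hmem : insert i (B.erase j) ∈ Finset.powersetCard r (Finset.univ : Finset (Fin n)) := by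
      rw [mem_powersetCard]
      exact ⟨subset_univ _, by rw [hcard, hBr]⟩
    have hle : toColex (insert i (B.erase j)) ≤ toColex B := by
      rw [Finset.Colex.toColex_le_toColex]
      intro a ha haB
      have : a = i := by
        rcases mem_insert.1 ha with rfl | h
        · rfl
        · exact absurd (mem_of_mem_erase h) haB
      subst this
      refine ⟨j, hjB, ?_, le_of_lt hij⟩
      simp [Ne.symm hne]
    have h𝒜' : insert i (B.erase j) ∈ 𝒜 := hinit B hB𝒜 _ hmem hle
    rw [himg]
    simp only [hT, mem_filter]
    refine ⟨⟨h𝒜', mem_insert_self _ _⟩, ?_⟩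
    intro h
    rcases mem_insert.1 h with h | h
    · exact hne h.symm
    · exact absurd rfl (ne_of_mem_erase h)
  -- card equality
  have hcardST : S.card = T.card := by
    have e1 : ((𝒜.filter (fun A => i ∈ A)).filter (fun A => j ∈ A)).card + T.card
        = (𝒜.filter (fun A => i ∈ A)).card :=
      card_filter_add_card_filter_not (fun A => j ∈ A)
    have e2 : ((𝒜.filter (fun A => j ∈ A)).filter (fun A => i ∈ A)).card + S.card
        = (𝒜.filter (fun A => j ∈ A)).card :=
      card_filter_add_card_filter_not (fun A => i ∈ A)
    have e3 : (𝒜.filter (fun A => i ∈ A)).filter (fun A => j ∈ A)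
        = (𝒜.filter (fun A => j ∈ A)).filter (fun A => i ∈ A) := filter_comm _ _ _
    rw [e3] at e1
    omega
  -- swap image is injective on finsets
  have hinj : Function.Injective (fun A : Finset (Fin n) => A.image (Equiv.swap i j)) :=
    Finset.image_injective (Equiv.injective _)
  -- S maps onto T
  have stepC : S.image (fun A => A.image (Equiv.swap i j)) = T := by
    apply eq_of_subset_of_card_le
    · intro A hA
      obtain ⟨B, hB, rfl⟩ := mem_image.1 hA
      exact stepA B hB
    · rw [card_image_of_injective _ hinj, hcardST]
  -- key: swap of any member is a member
  have key : ∀ A ∈ 𝒜, A.image (Equiv.swap i j) ∈ 𝒜 := by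
    intro A hA
    by_cases hiA : i ∈ A <;> by_cases hjA : j ∈ A
    · -- both: image = A
      have : A.image (Equiv.swap i j) = A := by
        apply eq_of_subset_of_card_le
        · intro a ha
          obtain ⟨b, hb, rfl⟩ := mem_image.1 ha
          rcases eq_or_ne b i with rfl | hbi
          · rwa [Equiv.swap_apply_left]
          rcases eq_or_ne b j with rfl | hbj
          · rwa [Equiv.swap_apply_right]
          · rwa [Equiv.swap_apply_of_ne_of_ne hbi hbj]
        · rw [card_image_of_injective _ (Equiv.injective _)]
      rwa [this]
    · -- i ∈ A, j ∉ A : use surjectivity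
      have hAT : A ∈ T := by simp only [hT, mem_filter]; exact ⟨⟨hA, hiA⟩, hjA⟩
      rw [← stepC] at hAT
      obtain ⟨B, hB, rfl⟩ := mem_image.1 hAT
      have : (B.image (Equiv.swap i j)).image (Equiv.swap i j) = B := by
        rw [image_image]
        have : (Equiv.swap i j) ∘ (Equiv.swap i j) = id := by
          ext x; simp [Equiv.swap_apply_self]
        rw [this, image_id]
      rw [this]
      exact (mem_filter.1 (mem_filter.1 hB).1).1
    · -- j ∈ A, i ∉ A : stepA
      have hAS : A ∈ S := by simp only [hS, mem_filter]; exact ⟨⟨hA, hjA⟩, hiA⟩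
      have := stepA A hAS
      exact (mem_filter.1 (mem_filter.1 this).1).1
    · -- neither: image = A
      have : A.image (Equiv.swap i j) = A := by
        apply Finset.image_congr (g := id) ?_ |>.trans (image_id)
        intro a ha
        exact Equiv.swap_apply_of_ne_of_ne (fun h => hiA (h ▸ ha)) (fun h => hjA (h ▸ ha))
      rwa [this]
  apply eq_of_subset_of_card_le
  · intro A hA
    obtain ⟨B, hB, rfl⟩ := mem_image.1 hA
    exact key B hB
  · rw [card_image_of_injective _ hinj]
end
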